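/- Let g : (0,∞) → ℝ satisfy ∫₀^∞ |g(x)| dx < ∞ and ∫₀^∞ |g(x)|/x dx < ∞. Then the function g^×(t) = ∫₀^∞ {x/t} g(x)/x dx (where {·} denotes the fractional part) is square integrable on (0,∞). -/

import Mathlib

open MeasureTheory Set

/-- The multiplicative convolution of `g` with the fractional part:
`g^×(t) = ∫₀^∞ {x/t} g(x)/x dx`. -/
noncomputable def mulConvFract (g : ℝ → ℝ) (t : ℝ) : ℝ :=
  ∫ x in Ioi (0 : ℝ), Int.fract (x / t) * g x / x

/-- if `∫₀^∞ |g| < ∞` and `∫₀^∞ |g(x)|/x dx < ∞`, then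
`g^×` is square integrable on `(0,∞)`. -/
theorem stmt0 (g : ℝ → ℝ)
    (hM1 : IntegrableOn g (Ioi 0) volume)
    (hM2 : IntegrableOn (fun x => g x / x) (Ioi 0) volume) :
    MemLp (mulConvFract g) 2 (volume.restrict (Ioi 0)) := by
  set μ := volume.restrict (Ioi (0:ℝ)) with hμ
  set C1 : ℝ := ∫ x in Ioi (0:ℝ), |g x| with hC1
  set C2 : ℝ := ∫ x in Ioi (0:ℝ), |g x / x| with hC2
  have hC1nn : 0 ≤ C1 := integral_nonneg fun x => abs_nonneg _
  have hC2nn : 0 ≤ C2 := integral_nonneg fun x => abs_nonneg _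
  -- measurability of mulConvFract g
  obtain ⟨g', hg'sm, hg'ae⟩ := hM1.1
  have heq : ∀ t, mulConvFract g t = ∫ x in Ioi (0:ℝ), Int.fract (x / t) * g' x / x := by
    intro t
    refine integral_congr_ae ?_
    filter_upwards [hg'ae] with x hx
    rw [hx]
  have hmeas : AEStronglyMeasurable (mulConvFract g) μ := by
    have : StronglyMeasurable fun t => ∫ x in Ioi (0:ℝ), Int.fract (x / t) * g' x / x := by
      apply StronglyMeasurable.integral_prod_right
        (f := fun t x => Int.fract (x / t) * g' x / x)
      apply Measurable.stronglyMeasurable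
      exact (((measurable_snd.div measurable_fst).fract).mul
        (hg'sm.measurable.comp measurable_snd)).div measurable_snd
    rw [show mulConvFract g = _ from funext heq]
    exact this.aestronglyMeasurable
  -- pointwise bounds
  have hbound : ∀ t ∈ Ioi (0:ℝ), |mulConvFract g t| ≤ min C2 (C1 / t) := by
    intro t ht
    rw [mem_Ioi] at ht
    have hnorm : |mulConvFract g t| ≤ ∫ x in Ioi (0:ℝ), ‖Int.fract (x / t) * g x / x‖ := by
      rw [← Real.norm_eq_abs]
      exact norm_integral_le_integral_norm _
    have hnn : (0:ℝ → ℝ) ≤ᵐ[μ] fun x => ‖Int.fract (x / t) * g x / x‖ := by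
      filter_upwards with x using norm_nonneg _
    refine le_min ?_ ?_
    · refine hnorm.trans (integral_mono_of_nonneg hnn hM2.abs ?_)
      filter_upwards with x
      have h1 : (0:ℝ) ≤ Int.fract (x / t) := Int.fract_nonneg _
      have h2 : Int.fract (x / t) ≤ 1 := (Int.fract_lt_one _).le
      calc ‖Int.fract (x / t) * g x / x‖ = Int.fract (x / t) * |g x / x| := by
            rw [Real.norm_eq_abs, mul_div_assoc, abs_mul, abs_of_nonneg h1]
        _ ≤ 1 * |g x / x| := by gcongr
        _ = |g x / x| := one_mul _
    · have : ∫ x in Ioi (0:ℝ), |g x| / t = C1 / t := by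
        rw [integral_div]
      rw [← this]
      refine hnorm.trans (integral_mono_of_nonneg hnn (hM1.abs.div_const t) ?_)
      rw [Filter.EventuallyLE, ae_restrict_iff' measurableSet_Ioi]
      filter_upwards with x hx
      rw [mem_Ioi] at hx
      have h1 : (0:ℝ) ≤ Int.fract (x / t) := Int.fract_nonneg _
      have h2 : Int.fract (x / t) ≤ x / t := by
        have h3 : (0:ℝ) ≤ (⌊x / t⌋ : ℝ) :=
          Int.cast_nonneg (Int.floor_nonneg.2 (by positivity))
        rw [Int.fract]; linarith
      calc ‖Int.fract (x / t) * g x / x‖ = Int.fract (x / t) * (|g x| / x) := by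
            rw [Real.norm_eq_abs, mul_div_assoc, abs_mul, abs_of_nonneg h1, abs_div,
              abs_of_pos hx]
        _ ≤ (x / t) * (|g x| / x) := by gcongr
        _ = |g x| / t := by field_simp
  -- the dominating function
  set h : ℝ → ℝ := fun t => (min C2 (C1 / t)) ^ 2 with hh
  have hhmeas : Measurable h :=
    ((measurable_const.min (measurable_const.div measurable_id)).pow measurable_const)
  have hint : IntegrableOn h (Ioi 0) volume := by
    have hsplit : Ioc (0:ℝ) 1 ∪ Ioi 1 = Ioi 0 := Ioc_union_Ioi_eq_Ioi zero_le_one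
    rw [← hsplit]
    refine IntegrableOn.union ?_ ?_
    · refine Integrable.mono' (g := fun _ => C2 ^ 2) ?_
        hhmeas.aestronglyMeasurable.restrict ?_
      · exact integrableOn_const (by simp)
      · rw [ae_restrict_iff' measurableSet_Ioc]
        filter_upwards with t ht
        have h0 : (0:ℝ) ≤ min C2 (C1 / t) := by
          have : (0:ℝ) < t := ht.1
          positivity
        rw [Real.norm_eq_abs, hh, abs_of_nonneg (by positivity)]
        exact pow_le_pow_left₀ h0 (min_le_left _ _) 2
    · refine Integrable.mono' (g := fun t => C1 ^ 2 * t ^ (-2 : ℝ)) ?_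
        hhmeas.aestronglyMeasurable.restrict ?_
      · exact (integrableOn_Ioi_rpow_of_lt (by norm_num) one_pos).const_mul _
      · rw [ae_restrict_iff' measurableSet_Ioi]
        filter_upwards with t ht
        rw [mem_Ioi] at ht
        have ht0 : (0:ℝ) < t := lt_trans one_pos ht
        have h0 : (0:ℝ) ≤ min C2 (C1 / t) := by positivity
        have hrpow : t ^ (-2 : ℝ) = (t ^ 2)⁻¹ := by
          rw [← Real.rpow_natCast t 2, ← Real.rpow_neg ht0.le]
          norm_num
        rw [Real.norm_eq_abs, hh, abs_of_nonneg (by positivity), hrpow]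
        calc (min C2 (C1 / t)) ^ 2 ≤ (C1 / t) ^ 2 :=
              pow_le_pow_left₀ h0 (min_le_right _ _) 2
          _ = C1 ^ 2 * (t ^ 2)⁻¹ := by rw [div_pow, div_eq_mul_inv]
  -- conclude
  rw [memLp_two_iff_integrable_sq hmeas]
  have hsq : AEStronglyMeasurable (fun t => mulConvFract g t ^ 2) μ := by
    exact hmeas.pow 2
  refine Integrable.mono' (μ := μ) hint hsq ?_
  rw [hμ, ae_restrict_iff' measurableSet_Ioi]
  filter_upwards with t ht
  have hb := hbound t ht
  have h0 : (0:ℝ) ≤ min C2 (C1 / t) := le_trans (abs_nonneg _) hb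
  rw [Real.norm_eq_abs, abs_pow, hh]
  exact pow_le_pow_left₀ (abs_nonneg _) hb 2
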